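/- arXiv:0710.0376 — 4 statements merged into one kernel-verified Lean document; each statement's English description precedes it below -/
import Mathlib

section
/- (Stieltjes inversion / discontinuity of the resolvent.) Let ρ : ℝ → ℂ be continuous with compact support, and let G(z) = ∫_ℝ ρ(λ)/(z−λ) dλ for z off the real axis. Then for every η ∈ ℝ, lim_{ε→0⁺} (1/(2πi)) · [G(η − iε) − G(η + iε)] = ρ(η); equivalently, lim_{ε→0⁺} (1/(2πi)) ∫_ℝ ρ(λ)·(1/(η − iε − λ) − 1/(η + iε − λ)) dλ = ρ(η). -/
open MeasureTheory Real Filter Topology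

/-- Stieltjes inversion: the discontinuity of the resolvent
`G(z) = ∫ ρ(λ)/(z-λ) dλ` across the real axis recovers the density `ρ`. -/
theorem stmt_3 (ρ : ℝ → ℂ) (hρ : Continuous ρ) (hsupp : HasCompactSupport ρ)
    (η : ℝ) :
    Tendsto (fun ε : ℝ =>
        (1 / (2 * (π : ℂ) * Complex.I)) *
          ∫ t : ℝ, ρ t * (1 / ((η : ℂ) - Complex.I * ε - t)
            - 1 / ((η : ℂ) + Complex.I * ε - t)))
      (𝓝[>] 0) (𝓝 (ρ η)) := by
  have hπ : (0:ℝ) < π := Real.pi_pos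
  set φ : ℝ → ℝ → ℝ := fun ε t => ε / (π * ((t - η)^2 + ε^2)) with hφ
  have hcont : ∀ ε : ℝ, 0 < ε → Continuous (φ ε) := by
    intro ε hε
    apply continuous_const.div (by continuity)
    intro t
    positivity
  have key : Tendsto (fun ε => ∫ t, φ ε t • ρ t) (𝓝[>] 0) (𝓝 (ρ η)) := by
    apply tendsto_integral_peak_smul_of_integrable_of_tendsto
      (t := Set.Icc (η-1) (η+1)) measurableSet_Icc
      (Icc_mem_nhds (show η - 1 < η by linarith) (show η < η + 1 by linarith))
      measure_Icc_lt_top.ne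
    · -- nonneg
      filter_upwards [self_mem_nhdsWithin] with ε (hε : 0 < ε) x
      positivity
    · -- uniform convergence away from η
      intro u hu hηu
      rcases Metric.isOpen_iff.1 hu η hηu with ⟨δ, hδ, hball⟩
      rw [Metric.tendstoUniformlyOn_iff]
      intro r hr
      have hmem : Set.Ioo (0:ℝ) (r * (π * δ^2)) ∈ 𝓝[>] (0:ℝ) :=
        Ioo_mem_nhdsGT_of_mem ⟨le_rfl, by positivity⟩
      filter_upwards [hmem] with ε hε x hx
      obtain ⟨hε0, hεr⟩ := hε
      have hxη : δ ≤ |x - η| := by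
        by_contra h
        exact hx (hball (by simpa [Real.dist_eq] using lt_of_not_ge h))
      have h1 : δ^2 ≤ (x - η)^2 := by
        calc δ^2 ≤ |x-η|^2 := by gcongr
        _ = (x-η)^2 := sq_abs _
      have hle : φ ε x ≤ ε / (π * δ^2) := by
        apply div_le_div_of_nonneg_left hε0.le (by positivity)
        nlinarith
      have h2 : 0 ≤ φ ε x := by positivity
      rw [Pi.zero_apply, dist_comm, Real.dist_eq, sub_zero, abs_of_nonneg h2]
      calc φ ε x ≤ ε / (π * δ^2) := hle
        _ < r := by rw [div_lt_iff₀ (by positivity)]; nlinarith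
    · -- integral → 1
      have heq : ∀ᶠ ε in 𝓝[>] (0:ℝ),
          (2/π) * Real.arctan (1/ε) = ∫ x in Set.Icc (η-1) (η+1), φ ε x := by
        filter_upwards [self_mem_nhdsWithin] with ε (hε : 0 < ε)
        rw [MeasureTheory.integral_Icc_eq_integral_Ioc,
          ← intervalIntegral.integral_of_le (by linarith : η - 1 ≤ η + 1)]
        have hderiv : ∀ x ∈ Set.uIcc (η-1) (η+1),
            HasDerivAt (fun x => Real.arctan ((x - η)/ε) / π) (φ ε x) x := by
          intro x _
          have h1 : HasDerivAt (fun x : ℝ => (x - η)/ε) (1/ε) x := by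
            simpa using ((hasDerivAt_id x).sub_const η).div_const ε
          have h2 := (Real.hasDerivAt_arctan ((x - η)/ε)).comp x h1
          have h3 := h2.div_const π
          refine h3.congr_deriv ?_
          rw [hφ]
          field_simp
          ring
        rw [intervalIntegral.integral_eq_sub_of_hasDerivAt hderiv
          (((hcont ε hε).intervalIntegrable _ _))]
        rw [show (η + 1 - η)/ε = 1/ε by ring, show (η - 1 - η)/ε = -(1/ε) by ring,
          Real.arctan_neg]
        field_simp
        ring
      have hlim : Tendsto (fun ε : ℝ => (2/π) * Real.arctan (1/ε)) (𝓝[>] 0) (𝓝 1) := by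
        have h1 : Tendsto (fun ε : ℝ => 1/ε) (𝓝[>] (0:ℝ)) atTop := by
          simpa [one_div] using tendsto_inv_nhdsGT_zero
        have h2 := (tendsto_nhds_of_tendsto_nhdsWithin Real.tendsto_arctan_atTop).comp h1
        have h3 := h2.const_mul (2/π)
        convert h3 using 2
        · rfl
        · field_simp
      exact hlim.congr' heq
    · -- measurability
      filter_upwards [self_mem_nhdsWithin] with ε (hε : 0 < ε)
      exact (hcont ε hε).aestronglyMeasurable
    · exact hρ.integrable_of_hasCompactSupport hsupp
    · exact hρ.continuousAt.tendsto
  refine key.congr' ?_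
  filter_upwards [self_mem_nhdsWithin] with ε (hε : 0 < ε)
  rw [← MeasureTheory.integral_const_mul]
  refine integral_congr_ae (Filter.Eventually.of_forall fun t => ?_)
  have h1 : ((η : ℂ) - Complex.I * ε - t) ≠ 0 := by
    intro h
    have := congrArg Complex.im h
    simp at this
    linarith
  have h2 : ((η : ℂ) + Complex.I * ε - t) ≠ 0 := by
    intro h
    have := congrArg Complex.im h
    simp at this
    linarith
  have hd : ((t:ℂ) - η)^2 + (ε:ℂ)^2 ≠ 0 := by
    have hpos : (0:ℝ) < (t-η)^2 + ε^2 := by positivity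
    intro h
    have h' : (((t-η)^2 + ε^2 : ℝ) : ℂ) = 0 := by push_cast; linear_combination h
    exact hpos.ne' (by exact_mod_cast h')
  have hπc : (π : ℂ) ≠ 0 := by exact_mod_cast hπ.ne'
  show (φ ε t : ℝ) • ρ t = _
  rw [Complex.real_smul, hφ]
  have hprod : ((η:ℂ) - Complex.I*ε - t) * ((η:ℂ) + Complex.I*ε - t) = ((t:ℂ)-η)^2 + (ε:ℂ)^2 := by
    linear_combination (-(ε:ℂ)^2) * Complex.I_sq
  simp only [div_sub_div _ _ h1 h2, hprod]
  push_cast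
  field_simp
  ring
end

section
/- (∂_{z̄}(1/z) = π δ²(z) in the distributional sense.) Let φ : ℂ → ℂ be continuously differentiable (as a function of the two real variables x, y with z = x + iy) and compactly supported, and write ∂̄φ = (1/2)(∂φ/∂x + i·∂φ/∂y). Then ∫_ℂ (∂̄φ)(z) · (1/z) dA(z) = −π·φ(0). -/
open MeasureTheory Real

private lemma key_alg (r : ℝ) (hr : 0 < r) (θ : ℝ) (a b : ℂ) :
    (r : ℝ) • (((1/2 : ℂ) * (a + Complex.I * b)) * (1 / ((r : ℂ) * Complex.exp (θ * Complex.I)))) =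
      (1/2 : ℂ) * ((Real.cos θ : ℂ) * a + (Real.sin θ : ℂ) * b) +
        (Complex.I/2) * ((Real.cos θ : ℂ) * b - (Real.sin θ : ℂ) * a) := by
  have hrz : (r : ℂ) ≠ 0 := by exact_mod_cast hr.ne'
  have h1 : (1 : ℂ) / ((r : ℂ) * Complex.exp (θ * Complex.I))
      = (1 / (r : ℂ)) * ((Real.cos θ : ℂ) - (Real.sin θ : ℂ) * Complex.I) := by
    rw [one_div, mul_inv, ← Complex.exp_neg]
    have h2 : -((θ : ℂ) * Complex.I) = ((-θ : ℝ) : ℂ) * Complex.I := by push_cast; ring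
    rw [h2, Complex.exp_mul_I, ← Complex.ofReal_cos, ← Complex.ofReal_sin, Real.cos_neg,
      Real.sin_neg]
    push_cast
    ring
  rw [h1, Complex.real_smul]
  simp only [Complex.ofReal_cos, Complex.ofReal_sin]
  field_simp
  linear_combination (-Complex.sin θ * b) * Complex.I_sq

private lemma lin1 (A : ℂ →L[ℝ] ℂ) (θ : ℝ) :
    A (Complex.exp (θ * Complex.I)) = (Real.cos θ : ℂ) * A 1 + (Real.sin θ : ℂ) * A Complex.I := by
  have h : Complex.exp (θ * Complex.I) = (Real.cos θ) • (1 : ℂ) + (Real.sin θ) • Complex.I := by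
    rw [Complex.exp_mul_I, ← Complex.ofReal_cos, ← Complex.ofReal_sin]
    simp [Complex.real_smul]
  rw [h, map_add, A.map_smul, A.map_smul, Complex.real_smul, Complex.real_smul]

private lemma lin2 (A : ℂ →L[ℝ] ℂ) (θ : ℝ) :
    A (Complex.I * Complex.exp (θ * Complex.I))
      = (Real.cos θ : ℂ) * A Complex.I - (Real.sin θ : ℂ) * A 1 := by
  have h : Complex.I * Complex.exp (θ * Complex.I)
      = (Real.cos θ) • Complex.I + (-Real.sin θ) • (1 : ℂ) := by
    rw [Complex.exp_mul_I]
    simp only [Complex.real_smul, Complex.ofReal_cos, Complex.ofReal_sin, Complex.ofReal_neg,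
      mul_one]
    linear_combination (Complex.sin θ) * Complex.I_sq
  rw [h, map_add, A.map_smul, A.map_smul, Complex.real_smul, Complex.real_smul]
  push_cast; ring

private lemma integrableOn_target {G : ℝ × ℝ → ℂ} (hc : Continuous G) {R M : ℝ} (hR : 0 < R)
    (h0 : ∀ p : ℝ × ℝ, R ≤ p.1 → G p = 0) (hb : ∀ p, ‖G p‖ ≤ M) :
    IntegrableOn G (Set.Ioi (0:ℝ) ×ˢ Set.Ioo (-π) π) := by
  rw [show Set.Ioi (0:ℝ) = Set.Ioc 0 R ∪ Set.Ioi R from (Set.Ioc_union_Ioi_eq_Ioi hR.le).symm,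
    Set.union_prod]
  apply IntegrableOn.union
  · apply Measure.integrableOn_of_bounded (M := M)
    · rw [MeasureTheory.Measure.volume_eq_prod, Measure.prod_prod, Real.volume_Ioc,
        Real.volume_Ioo]
      exact ENNReal.mul_ne_top ENNReal.ofReal_ne_top ENNReal.ofReal_ne_top
    · exact hc.aestronglyMeasurable
    · exact Filter.Eventually.of_forall hb
  · refine (integrableOn_congr_fun (fun p hp => h0 p (le_of_lt hp.1))
      (measurableSet_Ioi.prod measurableSet_Ioo)).mpr integrableOn_zero

/-- `∂̄(1/z) = π δ²(z)` in the distributional sense: for `φ` a compactly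
supported `C¹` function on `ℂ`, with `∂̄φ = (1/2)(∂_x φ + i ∂_y φ)`,
one has `∫_ℂ (∂̄φ)(z) · (1/z) dA(z) = -π φ(0)`. -/
theorem stmt_6 (φ : ℂ → ℂ) (hφ : ContDiff ℝ 1 φ) (hsupp : HasCompactSupport φ) :
    ∫ z : ℂ,
        ((1 / 2 : ℂ) * (fderiv ℝ φ z 1 + Complex.I * fderiv ℝ φ z Complex.I)) *
          (1 / z)
      = -(π : ℂ) * φ 0 := by
  have hφd : Differentiable ℝ φ := hφ.differentiable one_ne_zero
  have hDc : Continuous (fderiv ℝ φ) := hφ.continuous_fderiv one_ne_zero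
  obtain ⟨R, hR0, hRsub⟩ : ∃ R : ℝ, 0 < R ∧ tsupport φ ⊆ Metric.ball 0 R :=
    hsupp.isBounded.subset_ball_lt 0 0
  have hφ0 : ∀ z : ℂ, R ≤ ‖z‖ → φ z = 0 := by
    intro z hz
    apply image_eq_zero_of_notMem_tsupport
    intro h
    have := hRsub h
    rw [Metric.mem_ball, Complex.dist_eq, sub_zero] at this
    linarith
  have hD0 : ∀ z : ℂ, R ≤ ‖z‖ → fderiv ℝ φ z = 0 := by
    intro z hz
    by_contra hne
    have hmem : z ∈ tsupport φ := support_fderiv_subset ℝ (Function.mem_support.mpr hne)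
    have := hRsub hmem
    rw [Metric.mem_ball, Complex.dist_eq, sub_zero] at this
    linarith
  have habs : ∀ (r θ : ℝ), ‖(r:ℂ) * Complex.exp ((θ:ℂ) * Complex.I)‖ = |r| := by
    intro r θ
    simp [Complex.norm_exp_ofReal_mul_I]
  obtain ⟨M, hM⟩ : ∃ M : ℝ, ∀ z, ‖fderiv ℝ φ z‖ ≤ M :=
    hDc.bounded_above_of_compact_support (hsupp.fderiv (𝕜 := ℝ))
  set G1 : ℝ × ℝ → ℂ := fun p =>
    (1/2 : ℂ) * fderiv ℝ φ ((p.1:ℂ) * Complex.exp ((p.2:ℂ) * Complex.I))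
      (Complex.exp ((p.2:ℂ) * Complex.I)) with hG1def
  set G2 : ℝ × ℝ → ℂ := fun p =>
    (Complex.I/2) * fderiv ℝ φ ((p.1:ℂ) * Complex.exp ((p.2:ℂ) * Complex.I))
      (Complex.I * Complex.exp ((p.2:ℂ) * Complex.I)) with hG2def
  have hzc : Continuous fun p : ℝ × ℝ => (p.1:ℂ) * Complex.exp ((p.2:ℂ) * Complex.I) := by
    fun_prop
  have hec : Continuous fun p : ℝ × ℝ => Complex.exp ((p.2:ℂ) * Complex.I) := by fun_prop
  have hG1c : Continuous G1 := continuous_const.mul ((hDc.comp hzc).clm_apply hec)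
  have hG2c : Continuous G2 :=
    continuous_const.mul ((hDc.comp hzc).clm_apply (continuous_const.mul hec))
  -- generic bound
  have hbd : ∀ (c v z : ℂ), ‖c‖ ≤ 1 → ‖v‖ ≤ 1 → ‖c * fderiv ℝ φ z v‖ ≤ M := by
    intro c v z hc hv
    calc ‖c * fderiv ℝ φ z v‖ = ‖c‖ * ‖fderiv ℝ φ z v‖ := norm_mul _ _
    _ ≤ 1 * (‖fderiv ℝ φ z‖ * ‖v‖) := by
        gcongr
        exact (fderiv ℝ φ z).le_opNorm v
    _ ≤ 1 * (M * 1) := by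
        gcongr
        · exact (norm_nonneg _).trans (hM 0)
        · exact hM z
    _ = M := by ring
  have hne : ∀ θ : ℝ, ‖Complex.exp ((θ:ℂ) * Complex.I)‖ = 1 := fun θ =>
    Complex.norm_exp_ofReal_mul_I θ
  have hb1 : ∀ p, ‖G1 p‖ ≤ M := by
    intro p
    apply hbd
    · rw [norm_div]; simp; norm_num
    · exact le_of_eq (hne p.2)
  have hb2 : ∀ p, ‖G2 p‖ ≤ M := by
    intro p
    apply hbd
    · rw [norm_div]; simp; norm_num
    · rw [norm_mul, Complex.norm_I, one_mul]; exact le_of_eq (hne p.2)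
  have h10 : ∀ p : ℝ × ℝ, R ≤ p.1 → G1 p = 0 := by
    intro p hp
    have h := hD0 ((p.1:ℂ) * Complex.exp ((p.2:ℂ) * Complex.I))
      (by rw [habs]; exact hp.trans (le_abs_self _))
    simp [hG1def, h]
  have h20 : ∀ p : ℝ × ℝ, R ≤ p.1 → G2 p = 0 := by
    intro p hp
    have h := hD0 ((p.1:ℂ) * Complex.exp ((p.2:ℂ) * Complex.I))
      (by rw [habs]; exact hp.trans (le_abs_self _))
    simp [hG2def, h]
  have hG1int : IntegrableOn G1 (Set.Ioi (0:ℝ) ×ˢ Set.Ioo (-π) π) :=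
    integrableOn_target hG1c hR0 h10 hb1
  have hG2int : IntegrableOn G2 (Set.Ioi (0:ℝ) ×ˢ Set.Ioo (-π) π) :=
    integrableOn_target hG2c hR0 h20 hb2
  -- derivative helpers
  have hz_r : ∀ (c : ℂ) (r : ℝ), HasDerivAt (fun r : ℝ => (r:ℂ) * c) c r := by
    intro c r
    simpa using (Complex.ofRealCLM.hasDerivAt (x := r)).mul_const c
  have hz_θ : ∀ (r θ : ℝ),
      HasDerivAt (fun θ : ℝ => (r:ℂ) * Complex.exp ((θ:ℂ) * Complex.I))
        ((r:ℂ) * (Complex.exp ((θ:ℂ) * Complex.I) * Complex.I)) θ := by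
    intro r θ
    exact ((hz_r Complex.I θ).cexp).const_mul _
  -- step 1: polar coordinates
  have hstep1 : (∫ z : ℂ,
        ((1 / 2 : ℂ) * (fderiv ℝ φ z 1 + Complex.I * fderiv ℝ φ z Complex.I)) * (1 / z))
      = ∫ p in Set.Ioi (0:ℝ) ×ˢ Set.Ioo (-π) π, (G1 p + G2 p) := by
    rw [← Complex.integral_comp_polarCoord_symm
      (fun z => ((1 / 2 : ℂ) * (fderiv ℝ φ z 1 + Complex.I * fderiv ℝ φ z Complex.I)) * (1 / z)),
      polarCoord_target]
    apply setIntegral_congr_fun (measurableSet_Ioi.prod measurableSet_Ioo)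
    intro p hp
    have hsymm : Complex.polarCoord.symm p = (p.1:ℂ) * Complex.exp ((p.2:ℂ) * Complex.I) := by
      rw [Complex.polarCoord_symm_apply, Complex.exp_mul_I, ← Complex.ofReal_cos,
        ← Complex.ofReal_sin]
    simp only [hsymm, hG1def, hG2def]
    rw [lin1, lin2]
    exact key_alg p.1 hp.1 p.2 _ _
  -- the G2 integral vanishes
  have hinner2 : ∀ r ∈ Set.Ioi (0:ℝ), (∫ θ in Set.Ioo (-π) π, G2 (r, θ)) = 0 := by
    intro r hr
    have hrz : (r:ℂ) ≠ 0 := Complex.ofReal_ne_zero.mpr (ne_of_gt hr)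
    have hderiv : ∀ θ ∈ Set.uIcc (-π) π,
        HasDerivAt
          (fun θ : ℝ => (Complex.I/(2*(r:ℂ))) * φ ((r:ℂ) * Complex.exp ((θ:ℂ) * Complex.I)))
          (G2 (r, θ)) θ := by
      intro θ _
      have h4 := (hφd _).hasFDerivAt.comp_hasDerivAt θ (hz_θ r θ)
      have h5 := h4.const_mul (Complex.I/(2*(r:ℂ)))
      have h5' : HasDerivAt
          (fun θ : ℝ => (Complex.I/(2*(r:ℂ))) * φ ((r:ℂ) * Complex.exp ((θ:ℂ) * Complex.I)))
          ((Complex.I/(2*(r:ℂ))) * (fderiv ℝ φ ((r:ℂ) * Complex.exp ((θ:ℂ) * Complex.I))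
            ((r:ℂ) * (Complex.exp ((θ:ℂ) * Complex.I) * Complex.I)))) θ := by
        simpa [Function.comp_def] using h5
      convert h5' using 1
      have heq : (fderiv ℝ φ ((r:ℂ) * Complex.exp ((θ:ℂ) * Complex.I)))
            ((r:ℂ) * (Complex.exp ((θ:ℂ) * Complex.I) * Complex.I))
          = (r:ℂ) * (fderiv ℝ φ ((r:ℂ) * Complex.exp ((θ:ℂ) * Complex.I))
              (Complex.I * Complex.exp ((θ:ℂ) * Complex.I))) := by
        rw [show ((r:ℂ) * (Complex.exp ((θ:ℂ) * Complex.I) * Complex.I))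
            = r • (Complex.I * Complex.exp ((θ:ℂ) * Complex.I)) by
          rw [Complex.real_smul]; ring]
        rw [(fderiv ℝ φ _).map_smul, Complex.real_smul]
      rw [heq, hG2def]
      field_simp
    have hint2 : IntervalIntegrable (fun θ => G2 (r, θ)) volume (-π) π :=
      (hG2c.comp (Continuous.prodMk_right r)).intervalIntegrable _ _
    rw [← integral_Ioc_eq_integral_Ioo,
      ← intervalIntegral.integral_of_le (by linarith [pi_pos] : -π ≤ π),
      intervalIntegral.integral_eq_sub_of_hasDerivAt hderiv hint2]
    have h2 : Complex.exp (((-π : ℝ):ℂ) * Complex.I) = -1 := by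
      push_cast
      rw [neg_mul, Complex.exp_neg, Complex.exp_pi_mul_I]
      norm_num
    rw [h2, Complex.exp_pi_mul_I]
    ring
  have hI2 : (∫ p in Set.Ioi (0:ℝ) ×ˢ Set.Ioo (-π) π, G2 p) = 0 := by
    have hprod : Integrable G2
        ((volume.restrict (Set.Ioi (0:ℝ))).prod (volume.restrict (Set.Ioo (-π) π))) := by
      rw [Measure.prod_restrict, ← MeasureTheory.Measure.volume_eq_prod]; exact hG2int
    calc (∫ p in Set.Ioi (0:ℝ) ×ˢ Set.Ioo (-π) π, G2 p)
        = ∫ p, G2 p ∂((volume.restrict (Set.Ioi (0:ℝ))).prod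
            (volume.restrict (Set.Ioo (-π) π))) := by
          rw [Measure.prod_restrict, ← MeasureTheory.Measure.volume_eq_prod]
    _ = ∫ r in Set.Ioi (0:ℝ), ∫ θ in Set.Ioo (-π) π, G2 (r, θ) := integral_prod _ hprod
    _ = 0 := by
        rw [setIntegral_congr_fun measurableSet_Ioi (fun r hr => hinner2 r hr)]
        simp
  -- the G1 integral
  have hinner1 : ∀ θ : ℝ, (∫ r in Set.Ioi (0:ℝ), G1 (r, θ)) = -((1/2:ℂ) * φ 0) := by
    intro θ
    have hcont : ContinuousWithinAt
        (fun r : ℝ => (1/2:ℂ) * φ ((r:ℂ) * Complex.exp ((θ:ℂ) * Complex.I)))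
        (Set.Ici 0) 0 := Continuous.continuousWithinAt (by fun_prop)
    have hderiv : ∀ r ∈ Set.Ioi (0:ℝ), HasDerivAt
        (fun r : ℝ => (1/2:ℂ) * φ ((r:ℂ) * Complex.exp ((θ:ℂ) * Complex.I)))
        (G1 (r, θ)) r := by
      intro r _
      have h4 := (hφd _).hasFDerivAt.comp_hasDerivAt r
        (hz_r (Complex.exp ((θ:ℂ) * Complex.I)) r)
      simpa [Function.comp_def, hG1def] using h4.const_mul (1/2:ℂ)
    have hcs : HasCompactSupport (fun r : ℝ => G1 (r, θ)) := by
      apply HasCompactSupport.intro (isCompact_Icc (a := -R) (b := R))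
      intro r hr
      have hRr : R ≤ |r| := by
        rw [Set.mem_Icc] at hr
        rcases not_and_or.mp hr with h | h
        · exact le_abs.mpr (Or.inr (by linarith [not_le.mp h]))
        · exact le_abs.mpr (Or.inl (by linarith [not_le.mp h]))
      have h := hD0 ((r:ℂ) * Complex.exp ((θ:ℂ) * Complex.I)) (by rw [habs]; exact hRr)
      simp [hG1def, h]
    have hf'int : IntegrableOn (fun r : ℝ => G1 (r, θ)) (Set.Ioi (0:ℝ)) :=
      ((hG1c.comp (by fun_prop : Continuous fun r : ℝ =>
        ((r, θ) : ℝ × ℝ))).integrable_of_hasCompactSupport hcs).integrableOn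
    have htend : Filter.Tendsto
        (fun r : ℝ => (1/2:ℂ) * φ ((r:ℂ) * Complex.exp ((θ:ℂ) * Complex.I)))
        Filter.atTop (nhds 0) := by
      refine Filter.Tendsto.congr' ?_ tendsto_const_nhds
      filter_upwards [Filter.eventually_ge_atTop R] with r hr
      rw [hφ0 _ (by rw [habs]; exact hr.trans (le_abs_self r)), mul_zero]
    have hFTC := integral_Ioi_of_hasDerivAt_of_tendsto hcont hderiv hf'int htend
    rw [hFTC]
    simp
  have hI1 : (∫ p in Set.Ioi (0:ℝ) ×ˢ Set.Ioo (-π) π, G1 p) = -(π:ℂ) * φ 0 := by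
    have hprod : Integrable G1
        ((volume.restrict (Set.Ioi (0:ℝ))).prod (volume.restrict (Set.Ioo (-π) π))) := by
      rw [Measure.prod_restrict, ← MeasureTheory.Measure.volume_eq_prod]; exact hG1int
    calc (∫ p in Set.Ioi (0:ℝ) ×ˢ Set.Ioo (-π) π, G1 p)
        = ∫ p, G1 p ∂((volume.restrict (Set.Ioi (0:ℝ))).prod
            (volume.restrict (Set.Ioo (-π) π))) := by
          rw [Measure.prod_restrict, ← MeasureTheory.Measure.volume_eq_prod]
    _ = ∫ θ in Set.Ioo (-π) π, ∫ r in Set.Ioi (0:ℝ), G1 (r, θ) := integral_prod_symm _ hprod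
    _ = ∫ θ in Set.Ioo (-π) π, -((1/2:ℂ) * φ 0) :=
        setIntegral_congr_fun measurableSet_Ioo (fun θ _ => hinner1 θ)
    _ = -(π:ℂ) * φ 0 := by
        rw [setIntegral_const, measureReal_def, Real.volume_Ioo,
          ENNReal.toReal_ofReal (by linarith [pi_pos] : (0:ℝ) ≤ π - (-π)), Complex.real_smul]
        push_cast
        ring
  rw [hstep1, integral_add hG1int hG2int, hI1, hI2, add_zero]
end

section
/- (Bosonic Gaussian integral producing an inverse determinant.) Let M be an n×n complex matrix whose Hermitian part M + Mᴴ is positive definite. Then the Gaussian integral over ℂ^n converges and ∫_{ℂ^n} exp(−⟨x, M x⟩) dx = π^n / det(M), where ⟨x, Mx⟩ = ∑_{i,j} conj(x_i) M_{ij} x_j and dx is Lebesgue measure on ℂ^n. In particular det(M) ≠ 0 under this hypothesis. -/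
set_option maxHeartbeats 1000000


open MeasureTheory Real Matrix
open scoped ComplexOrder

private noncomputable def gQ {n : ℕ} (M : Matrix (Fin n) (Fin n) ℂ) (x : Fin n → ℂ) : ℂ :=
  ∑ i, ∑ j, (starRingEnd ℂ) (x i) * M i j * x j

private lemma gauss1 (a B C : ℂ) (ha : 0 < a.re) :
    ∫ z : ℂ, Complex.exp (-(a * z * (starRingEnd ℂ) z + B * (starRingEnd ℂ) z + C * z))
      = ↑π / a * Complex.exp (B * C / a) := by
  have hmp := Complex.volume_preserving_equiv_real_prod.symm
  rw [← hmp.integral_comp (MeasurableEquiv.measurableEmbedding _)]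
  have key : ∀ p : ℝ × ℝ,
      Complex.exp (-(a * (Complex.measurableEquivRealProd.symm p) *
          (starRingEnd ℂ) (Complex.measurableEquivRealProd.symm p) +
          B * (starRingEnd ℂ) (Complex.measurableEquivRealProd.symm p) +
          C * (Complex.measurableEquivRealProd.symm p)))
        = Complex.exp (-a * (p.1:ℂ)^2 + (-(B+C)) * p.1 + 0) *
          Complex.exp (-a * (p.2:ℂ)^2 + (-(C-B)*Complex.I) * p.2 + 0) := by
    intro p
    rw [← Complex.exp_add]
    congr 1
    simp only [Complex.measurableEquivRealProd_symm_apply]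
    have : (⟨p.1, p.2⟩ : ℂ) = (p.1:ℂ) + (p.2:ℂ) * Complex.I := by
      simp [Complex.mk_eq_add_mul_I]
    rw [this]
    simp only [map_add, _root_.map_mul, Complex.conj_ofReal, Complex.conj_I]
    ring_nf
    rw [Complex.I_sq]
    ring
  simp_rw [key]
  have := MeasureTheory.integral_prod_mul (μ := (volume : Measure ℝ)) (ν := (volume : Measure ℝ))
    (f := fun s : ℝ => Complex.exp (-a * (s:ℂ)^2 + (-(B+C)) * s + 0))
    (g := fun t : ℝ => Complex.exp (-a * (t:ℂ)^2 + (-(C-B)*Complex.I) * t + 0))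
  rw [show ((volume : Measure ℝ).prod (volume : Measure ℝ)) = (volume : Measure (ℝ × ℝ)) from
    rfl] at this
  rw [this]
  rw [integral_cexp_quadratic (by simpa using ha), integral_cexp_quadratic (by simpa using ha)]
  rw [neg_neg]
  rw [mul_mul_mul_comm, ← Complex.cpow_add _ _ (by
      refine div_ne_zero (by exact_mod_cast Real.pi_ne_zero) (fun h => by simp [h] at ha))]
  norm_num
  left
  rw [← Complex.exp_add]
  congr 1
  have ha' : a ≠ 0 := fun h => by simp [h] at ha
  rw [mul_pow, Complex.I_sq]
  field_simp
  ring

private lemma gQ_cont {n : ℕ} (M : Matrix (Fin n) (Fin n) ℂ) :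
    Continuous (fun x : Fin n → ℂ => gQ M x) := by
  unfold gQ
  refine continuous_finset_sum _ fun i _ => continuous_finset_sum _ fun j _ => ?_
  exact ((continuous_star.comp (continuous_apply i)).mul continuous_const).mul
    (continuous_apply j)

private lemma gQ_smul {n : ℕ} (M : Matrix (Fin n) (Fin n) ℂ) (s : ℝ) (x : Fin n → ℂ) :
    gQ M (s • x) = (s:ℂ)^2 * gQ M x := by
  unfold gQ
  rw [Finset.mul_sum]
  refine Finset.sum_congr rfl fun i _ => ?_
  rw [Finset.mul_sum]
  refine Finset.sum_congr rfl fun j _ => ?_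
  simp only [Pi.smul_apply, Complex.real_smul, _root_.map_mul, Complex.conj_ofReal]
  ring

private lemma gQ_bound {n : ℕ} (M : Matrix (Fin n) (Fin n) ℂ)
    (hpos : ∀ x : Fin n → ℂ, x ≠ 0 → 0 < (gQ M x).re) :
    ∃ c : ℝ, 0 < c ∧ ∀ x : Fin n → ℂ, c * (∑ i, ‖x i‖^2) ≤ (gQ M x).re := by
  rcases Nat.eq_zero_or_pos n with h0 | hn
  · subst h0
    exact ⟨1, one_pos, fun x => by simp [gQ]⟩
  · haveI : Nonempty (Fin n) := ⟨⟨0, hn⟩⟩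
    have hS : IsCompact (Metric.sphere (0 : Fin n → ℂ) 1) := isCompact_sphere _ _
    have hne : (Metric.sphere (0 : Fin n → ℂ) 1).Nonempty :=
      NormedSpace.sphere_nonempty.mpr zero_le_one
    obtain ⟨u, huS, hmin⟩ := hS.exists_isMinOn hne
      ((Complex.continuous_re.comp (gQ_cont M)).continuousOn)
    have hu1 : ‖u‖ = 1 := by simpa using huS
    have hu0 : u ≠ 0 := fun h => by simp [h] at hu1
    set c := (gQ M u).re with hc_def
    have hc : 0 < c := hpos u hu0
    refine ⟨c / n, div_pos hc (by exact_mod_cast hn), fun x => ?_⟩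
    rcases eq_or_ne x 0 with rfl | hx
    · simp [gQ]
    · set r : ℝ := ‖x‖ with hr_def
      have hr : 0 < r := norm_pos_iff.mpr hx
      have hmem : r⁻¹ • x ∈ Metric.sphere (0 : Fin n → ℂ) 1 := by
        simp only [mem_sphere_iff_norm, sub_zero, norm_smul, norm_inv, Real.norm_eq_abs]
        rw [abs_of_pos hr]
        exact inv_mul_cancel₀ hr.ne'
      have hscale : (gQ M x).re = r^2 * (gQ M (r⁻¹ • x)).re := by
        have : x = r • (r⁻¹ • x) := by
          rw [smul_smul, mul_inv_cancel₀ hr.ne', one_smul]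
        conv_lhs => rw [this, gQ_smul]
        rw [← Complex.ofReal_pow, Complex.re_ofReal_mul]
      have h1 : c ≤ (gQ M (r⁻¹ • x)).re := hmin hmem
      have h2 : (∑ i, ‖x i‖^2) ≤ n * r^2 := by
        calc (∑ i, ‖x i‖^2) ≤ ∑ _i : Fin n, r^2 :=
              Finset.sum_le_sum fun i _ => by
                have := norm_le_pi_norm x i
                nlinarith [norm_nonneg (x i)]
          _ = n * r^2 := by simp [Finset.sum_const, mul_comm]
      rw [hscale]
      have hn' : (0:ℝ) < n := by exact_mod_cast hn
      calc c / n * (∑ i, ‖x i‖^2) ≤ c / n * (n * r^2) := by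
            apply mul_le_mul_of_nonneg_left h2 (le_of_lt (div_pos hc hn'))
        _ = c * r^2 := by field_simp
        _ ≤ r^2 * (gQ M (r⁻¹ • x)).re := by nlinarith [sq_nonneg r, hr]

private lemma gQ_integrable {n : ℕ} (M : Matrix (Fin n) (Fin n) ℂ)
    (hpos : ∀ x : Fin n → ℂ, x ≠ 0 → 0 < (gQ M x).re) :
    Integrable (fun x : Fin n → ℂ => Complex.exp (-gQ M x)) := by
  obtain ⟨c, hc, hb⟩ := gQ_bound M hpos
  have h1 : Integrable (fun z : ℂ => rexp (-c * ‖z‖^2)) := by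
    have hmp := Complex.volume_preserving_equiv_real_prod.symm
    rw [← hmp.integrable_comp_emb (MeasurableEquiv.measurableEmbedding _)]
    have : ((fun z : ℂ => rexp (-c*‖z‖^2)) ∘ (Complex.measurableEquivRealProd.symm))
        = fun p : ℝ × ℝ => rexp (-c * p.1^2) * rexp (-c * p.2^2) := by
      funext p
      simp only [Function.comp_apply, Complex.measurableEquivRealProd_symm_apply,
        Complex.sq_norm, Complex.normSq_mk, ← Real.exp_add]
      congr 1
      ring
    rw [this]
    exact (integrable_exp_neg_mul_sq hc).mul_prod (integrable_exp_neg_mul_sq hc)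
  have h2 : Integrable (fun x : Fin n → ℂ => ∏ i, rexp (-c * ‖x i‖^2)) :=
    Integrable.fintype_prod (fun _ => h1)
  refine h2.mono ?_ (Filter.Eventually.of_forall fun x => ?_)
  · exact (Complex.continuous_exp.comp (gQ_cont M).neg).aestronglyMeasurable
  · rw [Complex.norm_exp, Real.norm_of_nonneg (by positivity)]
    rw [show ∏ i, rexp (-c * ‖x i‖^2) = rexp (∑ i, -c * ‖x i‖^2) from (Real.exp_sum _ _).symm]
    apply Real.exp_le_exp.mpr
    have := hb x
    rw [Complex.neg_re]
    have hsum : ∑ i, -c * ‖x i‖^2 = -(c * ∑ i, ‖x i‖^2) := by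
      rw [← Finset.mul_sum]; ring
    rw [hsum]
    linarith

private lemma gQ_cons {n : ℕ} (M : Matrix (Fin (n+1)) (Fin (n+1)) ℂ) (z : ℂ) (y : Fin n → ℂ) :
    gQ M (Fin.cons z y) = M 0 0 * z * (starRingEnd ℂ) z
      + (∑ j, M 0 j.succ * y j) * (starRingEnd ℂ) z
      + (∑ i, (starRingEnd ℂ) (y i) * M i.succ 0) * z
      + gQ (M.submatrix Fin.succ Fin.succ) y := by
  unfold gQ
  simp only [Fin.sum_univ_succ, Fin.cons_zero, Fin.cons_succ, Matrix.submatrix_apply]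
  rw [Finset.sum_add_distrib, Finset.sum_mul, Finset.sum_mul]
  have h1 : ∀ j : Fin n, (starRingEnd ℂ) z * M 0 j.succ * y j
      = M 0 j.succ * y j * (starRingEnd ℂ) z := fun j => by ring
  rw [Finset.sum_congr rfl fun j _ => h1 j]
  ring

private lemma gQ_det_ne {n : ℕ} (M : Matrix (Fin n) (Fin n) ℂ)
    (hpos : ∀ x : Fin n → ℂ, x ≠ 0 → 0 < (gQ M x).re) : M.det ≠ 0 := by
  intro h
  obtain ⟨v, hv, hMv⟩ := (Matrix.exists_mulVec_eq_zero_iff).mpr h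
  have hz : gQ M v = 0 := by
    unfold gQ
    have : ∀ i, ∑ j, (starRingEnd ℂ) (v i) * M i j * v j
        = (starRingEnd ℂ) (v i) * (M.mulVec v i) := by
      intro i
      rw [Matrix.mulVec, dotProduct, Finset.mul_sum]
      exact Finset.sum_congr rfl fun j _ => by ring
    simp [this, hMv]
  have := hpos v hv
  rw [hz] at this
  simp at this

private lemma det_step {n : ℕ} (M : Matrix (Fin (n+1)) (Fin (n+1)) ℂ) (ha : M 0 0 ≠ 0) :
    M.det = M 0 0 * (Matrix.of fun i j : Fin n =>
      M i.succ j.succ - M i.succ 0 * M 0 j.succ / M 0 0).det := by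
  set a := M 0 0 with ha_def
  set N : Matrix (Fin n) (Fin n) ℂ :=
    Matrix.of fun i j : Fin n => M i.succ j.succ - M i.succ 0 * M 0 j.succ / a with hN
  set D : Matrix (Fin (n+1)) (Fin (n+1)) ℂ := Matrix.of fun i j =>
    Fin.cases (M 0 j) (fun i' => Fin.cases 0 (fun j' => N i' j') j) i with hD
  have hMD : M.det = D.det := by
    apply Matrix.det_eq_of_forall_row_eq_smul_add_const
      (c := fun i : Fin (n+1) => Fin.cases 0 (fun i' => M i'.succ 0 / a) i) (k := 0)
      (hk := rfl)
    intro i j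
    refine Fin.cases ?_ (fun i' => ?_) i
    · simp [hD]
    · refine Fin.cases ?_ (fun j' => ?_) j
      · simp [hD]
        field_simp
        rw [ha_def]
      · simp [hD, hN]
        field_simp
        ring
  have hDdet : D.det = a * N.det := by
    rw [Matrix.det_succ_column_zero, Fin.sum_univ_succ]
    have h0 : ∀ i : Fin n, D i.succ 0 = 0 := fun i => by simp [hD]
    simp only [h0, mul_zero, zero_mul, Finset.sum_const_zero, add_zero]
    have : D.submatrix (Fin.succAbove 0) Fin.succ = N := by
      ext i j
      simp [hD, Fin.succAbove_zero]
    rw [this]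
    simp [hD]
    exact Or.inl ha_def.symm
  rw [hMD, hDdet]

private lemma gQ_main : ∀ (n : ℕ) (M : Matrix (Fin n) (Fin n) ℂ),
    (∀ x : Fin n → ℂ, x ≠ 0 → 0 < (gQ M x).re) →
    (∫ x : Fin n → ℂ, Complex.exp (-gQ M x)) = (π:ℂ)^n / M.det := by
  intro n
  induction n with
  | zero =>
    intro M hpos
    have h1 : (fun x : Fin 0 → ℂ => Complex.exp (-gQ M x)) = fun _ => (1:ℂ) := by
      funext x; simp [gQ]
    rw [h1]
    simp only [MeasureTheory.integral_const, smul_eq_mul, mul_one, Matrix.det_fin_zero, pow_zero]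
    rw [measureReal_def, volume_pi, MeasureTheory.Measure.pi_empty_univ]
    simp
  | succ n ih =>
    intro M hpos
    have ha : 0 < (M 0 0).re := by
      have hx0 : (Fin.cons 1 0 : Fin (n+1) → ℂ) ≠ 0 := by
        intro h
        have := congrFun h 0
        simp at this
      have h := hpos _ hx0
      rw [gQ_cons] at h
      simpa [gQ] using h
    have ha' : (M 0 0) ≠ 0 := fun h => by simp [h] at ha
    set N : Matrix (Fin n) (Fin n) ℂ :=
      Matrix.of fun i j : Fin n => M i.succ j.succ - M i.succ 0 * M 0 j.succ / M 0 0 with hN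
    have hNQ : ∀ y : Fin n → ℂ, gQ N y = gQ (M.submatrix Fin.succ Fin.succ) y
        - (∑ j, M 0 j.succ * y j) * (∑ i, (starRingEnd ℂ) (y i) * M i.succ 0) / M 0 0 := by
      intro y
      have hBC : (∑ j, M 0 j.succ * y j) * (∑ i, (starRingEnd ℂ) (y i) * M i.succ 0)
          = ∑ i, ∑ j, (starRingEnd ℂ) (y i) * (M i.succ 0 * M 0 j.succ) * y j := by
        rw [mul_comm, Finset.sum_mul_sum]
        exact Finset.sum_congr rfl fun i _ => Finset.sum_congr rfl fun j _ => by ring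
      rw [hBC]
      unfold gQ
      have : ∀ i j : Fin n, (starRingEnd ℂ) (y i) * N i j * y j
          = (starRingEnd ℂ) (y i) * M.submatrix Fin.succ Fin.succ i j * y j
            - (starRingEnd ℂ) (y i) * (M i.succ 0 * M 0 j.succ) * y j / M 0 0 := by
        intro i j
        simp only [hN, Matrix.of_apply, Matrix.submatrix_apply]
        field_simp
      simp_rw [this, Finset.sum_sub_distrib, ← Finset.sum_div]
    have hposN : ∀ y : Fin n → ℂ, y ≠ 0 → 0 < (gQ N y).re := by
      intro y hy
      have hx : (Fin.cons (-(∑ j, M 0 j.succ * y j)/(M 0 0)) y : Fin (n+1) → ℂ) ≠ 0 := by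
        intro h
        apply hy
        funext i
        have := congrFun h i.succ
        simpa using this
      have h := hpos _ hx
      have he : gQ M (Fin.cons (-(∑ j, M 0 j.succ * y j)/(M 0 0)) y) = gQ N y := by
        rw [gQ_cons, hNQ]
        have hzero : M 0 0 * (-(∑ j, M 0 j.succ * y j)/(M 0 0)) + (∑ j, M 0 j.succ * y j)
            = 0 := by field_simp; try ring
        have hgroup : ∀ z g' : ℂ,
            M 0 0 * z * (starRingEnd ℂ) z + (∑ j, M 0 j.succ * y j) * (starRingEnd ℂ) z
              + (∑ i, (starRingEnd ℂ) (y i) * M i.succ 0) * z + g'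
            = (M 0 0 * z + (∑ j, M 0 j.succ * y j)) * (starRingEnd ℂ) z
              + (∑ i, (starRingEnd ℂ) (y i) * M i.succ 0) * z + g' := fun z g' => by ring
        rw [hgroup, hzero, zero_mul, zero_add]
        rw [div_eq_mul_inv, div_eq_mul_inv]
        ring
      rwa [he] at h
    have hdN : N.det ≠ 0 := gQ_det_ne N hposN
    have hInt : Integrable (fun x : Fin (n+1) → ℂ => Complex.exp (-gQ M x)) :=
      gQ_integrable M hpos
    have hmp := (measurePreserving_piFinSuccAbove (fun _ : Fin (n+1) => (volume : Measure ℂ)) 0).symm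
    have hcons : ∀ p : ℂ × (Fin n → ℂ),
        (MeasurableEquiv.piFinSuccAbove (fun _ : Fin (n+1) => ℂ) 0).symm p
          = Fin.cons p.1 p.2 := by
      intro p
      simp [MeasurableEquiv.piFinSuccAbove_symm_apply, Fin.insertNthEquiv]
    have key : (∫ x : Fin (n+1) → ℂ, Complex.exp (-gQ M x))
        = ∫ p : ℂ × (Fin n → ℂ), Complex.exp (-gQ M (Fin.cons p.1 p.2))
            ∂((volume : Measure ℂ).prod (Measure.pi fun _ : Fin n => (volume : Measure ℂ))) := by
      rw [volume_pi, ← hmp.integral_comp (MeasurableEquiv.measurableEmbedding _)]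
      exact integral_congr_ae (MeasureTheory.ae_of_all _ fun p => by simp only [hcons])
    have hIntP : Integrable (fun p : ℂ × (Fin n → ℂ) => Complex.exp (-gQ M (Fin.cons p.1 p.2)))
        ((volume : Measure ℂ).prod (Measure.pi fun _ : Fin n => (volume : Measure ℂ))) := by
      have h2 := (hmp.integrable_comp_emb (MeasurableEquiv.measurableEmbedding _)).mpr
        (by rw [← volume_pi]; exact hInt)
      have h3 : ((fun x : Fin (n+1) → ℂ => Complex.exp (-gQ M x)) ∘
          (MeasurableEquiv.piFinSuccAbove (fun _ : Fin (n+1) => ℂ) 0).symm)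
          = fun p : ℂ × (Fin n → ℂ) => Complex.exp (-gQ M (Fin.cons p.1 p.2)) := by
        funext p
        simp only [Function.comp_apply, hcons]
      rwa [h3] at h2
    rw [key, MeasureTheory.integral_prod_symm _ hIntP]
    have inner : ∀ y : Fin n → ℂ, (∫ z : ℂ, Complex.exp (-gQ M (Fin.cons z y)))
        = (π:ℂ)/(M 0 0) * Complex.exp (-gQ N y) := by
      intro y
      have hsplit : ∀ z : ℂ, Complex.exp (-gQ M (Fin.cons z y))
          = Complex.exp (-(M 0 0 * z * (starRingEnd ℂ) z
              + (∑ j, M 0 j.succ * y j) * (starRingEnd ℂ) z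
              + (∑ i, (starRingEnd ℂ) (y i) * M i.succ 0) * z))
            * Complex.exp (-gQ (M.submatrix Fin.succ Fin.succ) y) := by
        intro z
        rw [← Complex.exp_add, gQ_cons]
        ring_nf
      simp_rw [hsplit]
      rw [MeasureTheory.integral_mul_const, gauss1 _ _ _ ha, hNQ y, mul_assoc,
        ← Complex.exp_add]
      congr 2
      ring
    simp_rw [inner]
    rw [MeasureTheory.integral_const_mul, ← volume_pi, ih N hposN, det_step M ha', ← hN]
    rw [pow_succ]
    field_simp
/-- Bosonic Gaussian integral producing an inverse determinant: if the
Hermitian part `M + Mᴴ` is positive definite, then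
`∫_{ℂⁿ} exp(-⟨x, Mx⟩) dx = πⁿ / det M`, and in particular `det M ≠ 0`. -/
theorem stmt_12 (n : ℕ) (M : Matrix (Fin n) (Fin n) ℂ)
    (hM : (M + Mᴴ).PosDef) :
    Integrable (fun x : Fin n → ℂ =>
        Complex.exp (-∑ i, ∑ j, starRingEnd ℂ (x i) * M i j * x j)) ∧
    (∫ x : Fin n → ℂ,
        Complex.exp (-∑ i, ∑ j, starRingEnd ℂ (x i) * M i j * x j))
      = (π : ℂ) ^ n / M.det ∧
    M.det ≠ 0 := by
  have hpos : ∀ x : Fin n → ℂ, x ≠ 0 → 0 < (gQ M x).re := by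
    intro x hx
    have h := hM.dotProduct_mulVec_pos hx
    have hdot : dotProduct (star x) ((M + Mᴴ) *ᵥ x) = gQ M x + (starRingEnd ℂ) (gQ M x) := by
      unfold gQ
      calc dotProduct (star x) ((M + Mᴴ) *ᵥ x)
          = ∑ i, ∑ j, ((starRingEnd ℂ) (x i) * M i j * x j
            + (starRingEnd ℂ) (x i) * (starRingEnd ℂ) (M j i) * x j) := by
            simp only [dotProduct, Matrix.mulVec, Matrix.add_apply,
              Matrix.conjTranspose_apply, Pi.star_apply, RCLike.star_def, Finset.mul_sum]
            exact Finset.sum_congr rfl fun i _ => Finset.sum_congr rfl fun j _ => by ring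
        _ = _ := by
            simp only [Finset.sum_add_distrib]
            congr 1
            rw [map_sum, Finset.sum_comm]
            refine Finset.sum_congr rfl fun i _ => ?_
            rw [map_sum]
            refine Finset.sum_congr rfl fun j _ => ?_
            simp only [_root_.map_mul, Complex.conj_conj]
            ring
    rw [Complex.lt_def] at h
    have hre := h.1
    rw [hdot] at hre
    simp only [Complex.add_re, Complex.conj_re, Complex.zero_re] at hre
    linarith
  have hq : (fun x : Fin n → ℂ =>
      Complex.exp (-∑ i, ∑ j, starRingEnd ℂ (x i) * M i j * x j))
      = fun x => Complex.exp (-gQ M x) := rfl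
  refine ⟨by rw [hq]; exact gQ_integrable M hpos, ?_, gQ_det_ne M hpos⟩
  rw [show (∫ x : Fin n → ℂ, Complex.exp (-∑ i, ∑ j, starRingEnd ℂ (x i) * M i j * x j))
    = ∫ x : Fin n → ℂ, Complex.exp (-gQ M x) from rfl]
  exact gQ_main n M hpos
end

section
/- (Gaussian integration over complex rectangular matrices by completing the square.) Let σ > 0 be real, and let B be an m×n complex matrix and C an n×m complex matrix. Then ∫ exp(−σ·Tr(AᴴA) − i·Tr(AᴴB) − i·Tr(C·A)) dA = (π/σ)^{mn} · exp(−(1/σ)·Tr(C·B)), where the integral is over all m×n complex matrices A with Lebesgue measure on the entries. -/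
open MeasureTheory Real Matrix

lemma gauss1_s13 (σ : ℝ) (hσ : 0 < σ) (b c : ℂ) :
    ∫ z : ℂ, Complex.exp (-(σ : ℂ) * ((starRingEnd ℂ) z * z)
        - Complex.I * ((starRingEnd ℂ) z * b) - Complex.I * (c * z))
      = ((π / σ : ℝ) : ℂ) * Complex.exp (-(1 / (σ : ℂ)) * (c * b)) := by
  have hmp := Complex.volume_preserving_equiv_real_prod.symm Complex.measurableEquivRealProd
  rw [← hmp.integral_comp']
  have key : ∀ p : ℝ × ℝ,
      Complex.exp (-(σ : ℂ) * ((starRingEnd ℂ) (Complex.measurableEquivRealProd.symm p)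
          * (Complex.measurableEquivRealProd.symm p))
        - Complex.I * ((starRingEnd ℂ) (Complex.measurableEquivRealProd.symm p) * b)
        - Complex.I * (c * (Complex.measurableEquivRealProd.symm p)))
      = Complex.exp ((-(σ:ℂ)) * (p.1:ℂ) ^ 2 + (-(Complex.I * (b + c))) * (p.1:ℂ) + 0)
        * Complex.exp ((-(σ:ℂ)) * (p.2:ℂ) ^ 2 + (c - b) * (p.2:ℂ) + 0) := by
    intro p
    rw [← Complex.exp_add]
    congr 1
    have : (Complex.measurableEquivRealProd.symm p) = (p.1 : ℂ) + (p.2 : ℂ) * Complex.I := by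
      simp [Complex.ext_iff]
    rw [this]
    simp only [map_add, _root_.map_mul, Complex.conj_ofReal, Complex.conj_I]
    ring_nf
    simp only [Complex.I_sq]
    ring
  simp_rw [key]
  rw [MeasureTheory.Measure.volume_eq_prod ℝ ℝ, integral_prod_mul
    (f := fun x : ℝ => Complex.exp (-(σ:ℂ) * (x:ℂ)^2 + -(Complex.I*(b+c)) * (x:ℂ) + 0))
    (g := fun y : ℝ => Complex.exp (-(σ:ℂ) * (y:ℂ)^2 + (c-b) * (y:ℂ) + 0))]
  have hb : (-(σ:ℂ)).re < 0 := by simpa using hσ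
  rw [integral_cexp_quadratic hb, integral_cexp_quadratic hb]
  have hσ' : (σ:ℂ) ≠ 0 := by exact_mod_cast hσ.ne'
  rw [neg_neg]
  have hne : ((π:ℂ) / σ) ≠ 0 := div_ne_zero (by exact_mod_cast Real.pi_ne_zero) hσ'
  calc ((π:ℂ)/σ) ^ (1/2 : ℂ) * Complex.exp (0 - (-(Complex.I*(b+c)))^2 / (4 * -(σ:ℂ)))
        * (((π:ℂ)/σ) ^ (1/2 : ℂ) * Complex.exp (0 - (c-b)^2 / (4 * -(σ:ℂ))))
      = (((π:ℂ)/σ) ^ (1/2 : ℂ) * ((π:ℂ)/σ) ^ (1/2 : ℂ)) *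
        (Complex.exp (0 - (-(Complex.I*(b+c)))^2 / (4 * -(σ:ℂ)))
          * Complex.exp (0 - (c-b)^2 / (4 * -(σ:ℂ)))) := by ring
    _ = ((π / σ : ℝ) : ℂ) * Complex.exp (-(1 / (σ : ℂ)) * (c * b)) := by
        rw [← Complex.cpow_add _ _ hne, ← Complex.exp_add]
        norm_num
        refine Or.inl ?_
        congr 1
        linear_combination ((b+c)^2/(4*(σ:ℂ))) * Complex.I_sq

/-- Gaussian integration over complex rectangular `m × n` matrices by
completing the square:
`∫ exp(-σ Tr(AᴴA) - i Tr(AᴴB) - i Tr(C A)) dA = (π/σ)^{mn} exp(-(1/σ) Tr(C B))`. -/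
theorem stmt_13 (m n : ℕ) (σ : ℝ) (hσ : 0 < σ)
    (B : Matrix (Fin m) (Fin n) ℂ) (C : Matrix (Fin n) (Fin m) ℂ) :
    (∫ A : Fin m → Fin n → ℂ,
        Complex.exp (-(σ : ℂ) * ((Matrix.of A)ᴴ * Matrix.of A).trace
          - Complex.I * ((Matrix.of A)ᴴ * B).trace
          - Complex.I * (C * Matrix.of A).trace))
      = ((π / σ : ℝ) : ℂ) ^ (m * n) *
          Complex.exp (-(1 / (σ : ℂ)) * (C * B).trace) := by
  set f : Fin m → Fin n → ℂ → ℂ := fun i j z =>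
    Complex.exp (-(σ : ℂ) * ((starRingEnd ℂ) z * z)
      - Complex.I * ((starRingEnd ℂ) z * B i j) - Complex.I * (C j i * z)) with hf
  have hint : ∀ A : Fin m → Fin n → ℂ,
      Complex.exp (-(σ : ℂ) * ((Matrix.of A)ᴴ * Matrix.of A).trace
          - Complex.I * ((Matrix.of A)ᴴ * B).trace
          - Complex.I * (C * Matrix.of A).trace)
        = ∏ i, ∏ j, f i j (A i j) := by
    intro A
    have h1 : ((Matrix.of A)ᴴ * Matrix.of A).trace
        = ∑ i, ∑ j, (starRingEnd ℂ) (A i j) * A i j := by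
      simp [Matrix.trace, Matrix.mul_apply, Matrix.diag, Matrix.conjTranspose_apply]
      exact Finset.sum_comm
    have h2 : ((Matrix.of A)ᴴ * B).trace
        = ∑ i, ∑ j, (starRingEnd ℂ) (A i j) * B i j := by
      simp [Matrix.trace, Matrix.mul_apply, Matrix.diag, Matrix.conjTranspose_apply]
      exact Finset.sum_comm
    have h3 : (C * Matrix.of A).trace = ∑ i, ∑ j, C j i * A i j := by
      simp [Matrix.trace, Matrix.mul_apply, Matrix.diag]
      exact Finset.sum_comm
    rw [h1, h2, h3]
    simp_rw [Finset.mul_sum, ← Finset.sum_sub_distrib]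
    rw [Complex.exp_sum]
    exact Finset.prod_congr rfl fun i _ => Complex.exp_sum _ _
  simp_rw [hint]
  rw [MeasureTheory.integral_fintype_prod_volume_eq_prod (ι := Fin m)
    (f := fun i (r : Fin n → ℂ) => ∏ j, f i j (r j))]
  have hrow : ∀ i, (∫ r : Fin n → ℂ, ∏ j, f i j (r j))
      = ∏ j, ((π / σ : ℝ) : ℂ) * Complex.exp (-(1 / (σ : ℂ)) * (C j i * B i j)) := by
    intro i
    rw [MeasureTheory.integral_fintype_prod_volume_eq_prod (ι := Fin n) (f := fun j z => f i j z)]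
    exact Finset.prod_congr rfl fun j _ => gauss1_s13 σ hσ (B i j) (C j i)
  simp_rw [hrow, Finset.prod_mul_distrib, Finset.prod_const, ← Complex.exp_sum,
    Finset.card_univ, Fintype.card_fin]
  rw [← pow_mul, Nat.mul_comm n m]
  congr 1
  have h4 : (C * B).trace = ∑ j : Fin n, ∑ i : Fin m, C j i * B i j := by
    simp [Matrix.trace, Matrix.mul_apply, Matrix.diag]
  congr 1
  rw [h4, Finset.mul_sum]
  simp_rw [Finset.mul_sum]
  exact Finset.sum_comm
end
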